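/- Let K be a complete nonarchimedean valued field, 0 ≤ r₁ < r₂, and f = Σ_{k∈ℤ} a_k x^k a Laurent series converging on the annulus r₁ < |x| < r₂. Then f decomposes uniquely as f = f₊ + f₋, where f₊ = Σ_{k≥0} a_k x^k is a power series converging on the disk |x| < r₂ and f₋ = Σ_{k<0} a_k x^k converges for |x| > r₁ and tends to 0 as |x| → ∞. Moreover |f|_ρ = max(|f₊|_ρ, |f₋|_ρ) for every ρ ∈ (r₁, r₂). -/

import Mathlib

open scoped ENNReal
open Filter

private lemma ML.zpow_negsucc (x : ℝ) (k : ℕ) : x ^ (-((k:ℤ)+1)) = (x ^ (k+1))⁻¹ := by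
  rw [← zpow_natCast x (k+1), ← zpow_neg]; norm_num

private lemma ML.aux_pos {K : Type*} [NormedField K] (a : ℤ → K) (ρ ρ' : ℝ)
    (h0 : 0 ≤ ρ) (hle : ρ ≤ ρ')
    (h : Tendsto (fun k : ℤ => ‖a k‖ * ρ' ^ k) cofinite (nhds 0)) :
    Tendsto (fun k : ℕ => ‖a (k : ℤ)‖ * ρ ^ (k : ℤ)) atTop (nhds 0) := by
  have h1 : Tendsto (fun k : ℕ => ‖a (k : ℤ)‖ * ρ' ^ (k : ℤ)) atTop (nhds 0) := by
    rw [← Nat.cofinite_eq_atTop]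
    exact h.comp (Function.Injective.tendsto_cofinite (fun x y hxy => by exact_mod_cast hxy))
  refine squeeze_zero (fun k => ?_) (fun k => ?_) h1
  · rw [zpow_natCast]; positivity
  · rw [zpow_natCast, zpow_natCast]
    exact mul_le_mul_of_nonneg_left (pow_le_pow_left₀ h0 hle k) (norm_nonneg _)

private lemma ML.aux_neg {K : Type*} [NormedField K] (a : ℤ → K) (ρ ρ' : ℝ)
    (h0 : 0 < ρ') (hle : ρ' ≤ ρ)
    (h : Tendsto (fun k : ℤ => ‖a k‖ * ρ' ^ k) cofinite (nhds 0)) :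
    Tendsto (fun k : ℕ => ‖a (-((k:ℤ)+1))‖ * ρ ^ (-((k:ℤ)+1))) atTop (nhds 0) := by
  have hρ : 0 < ρ := h0.trans_le hle
  have h1 : Tendsto (fun k : ℕ => ‖a (-((k:ℤ)+1))‖ * ρ' ^ (-((k:ℤ)+1))) atTop (nhds 0) := by
    rw [← Nat.cofinite_eq_atTop]
    exact h.comp (Function.Injective.tendsto_cofinite
      (fun x y hxy => by simp only [neg_inj, add_left_inj, Nat.cast_inj] at hxy; exact hxy))
  refine squeeze_zero (fun k => ?_) (fun k => ?_) h1
  · rw [ML.zpow_negsucc]; positivity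
  · rw [ML.zpow_negsucc, ML.zpow_negsucc]
    refine mul_le_mul_of_nonneg_left ?_ (norm_nonneg _)
    gcongr

theorem mittagLeffler_decomposition {K : Type*} [NontriviallyNormedField K]
    [CompleteSpace K]
    (r₁ r₂ : ℝ) (hr₁ : 0 ≤ r₁) (hr : r₁ < r₂)
    (a : ℤ → K)
    (ha : ∀ ρ ∈ Set.Ioo r₁ r₂,
      Tendsto (fun k : ℤ => ‖a k‖ * ρ ^ k) cofinite (nhds 0)) :
    (∃! bc : (ℤ → K) × (ℤ → K),
        (∀ k : ℤ, k < 0 → bc.1 k = 0) ∧ (∀ k : ℤ, 0 ≤ k → bc.2 k = 0) ∧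
        (∀ k : ℤ, a k = bc.1 k + bc.2 k)) ∧
    (∀ ρ : ℝ, 0 < ρ → ρ < r₂ →
      Tendsto (fun k : ℕ => ‖a (k : ℤ)‖ * ρ ^ (k : ℤ)) atTop (nhds 0)) ∧
    (∀ ρ : ℝ, r₁ < ρ →
      Tendsto (fun k : ℕ => ‖a (-((k : ℤ) + 1))‖ * ρ ^ (-((k : ℤ) + 1)))
        atTop (nhds 0)) ∧
    (Tendsto
      (fun ρ : ℝ =>
        ⨆ k : ℕ, ENNReal.ofReal (‖a (-((k : ℤ) + 1))‖ * ρ ^ (-((k : ℤ) + 1))))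
      atTop (nhds 0)) ∧
    (∀ ρ ∈ Set.Ioo r₁ r₂,
      (⨆ k : ℤ, ENNReal.ofReal (‖a k‖ * ρ ^ k)) =
        max (⨆ k : ℕ, ENNReal.ofReal (‖a (k : ℤ)‖ * ρ ^ (k : ℤ)))
          (⨆ k : ℕ,
            ENNReal.ofReal (‖a (-((k : ℤ) + 1))‖ * ρ ^ (-((k : ℤ) + 1))))) := by
  have hmid : (r₁ + r₂) / 2 ∈ Set.Ioo r₁ r₂ := ⟨by linarith, by linarith⟩
  have hmid0 : 0 < (r₁ + r₂) / 2 := lt_of_le_of_lt hr₁ hmid.1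
  refine ⟨?_, ?_, ?_, ?_, ?_⟩
  · -- unique decomposition
    refine ⟨(fun k => if 0 ≤ k then a k else 0, fun k => if k < 0 then a k else 0),
      ⟨fun k hk => if_neg (not_le.mpr hk), fun k hk => if_neg (not_lt.mpr hk),
       fun k => ?_⟩, ?_⟩
    · show a k = (if 0 ≤ k then a k else 0) + (if k < 0 then a k else 0)
      by_cases h : 0 ≤ k
      · rw [if_pos h, if_neg (not_lt.mpr h), add_zero]
      · rw [if_neg h, if_pos (not_le.mp h), zero_add]
    · rintro ⟨b, c⟩ ⟨hb, hc, habc⟩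
      refine Prod.ext ?_ ?_ <;> funext k <;> dsimp only
      · by_cases h : 0 ≤ k
        · rw [if_pos h]
          have := habc k
          rw [hc k h, add_zero] at this
          exact this.symm
        · rw [if_neg h]; exact hb k (not_le.mp h)
      · by_cases h : k < 0
        · rw [if_pos h]
          have := habc k
          rw [hb k h, zero_add] at this
          exact this.symm
        · rw [if_neg h]; exact hc k (not_lt.mp h)
  · -- positive part convergence
    intro ρ hρ0 hρ2
    have h1 : r₁ < max ρ ((r₁ + r₂) / 2) := lt_max_of_lt_right hmid.1
    have h2 : max ρ ((r₁ + r₂) / 2) < r₂ := max_lt hρ2 hmid.2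
    exact ML.aux_pos a ρ _ hρ0.le (le_max_left _ _) (ha _ ⟨h1, h2⟩)
  · -- negative part convergence
    intro ρ hρ
    have h1 : r₁ < min ρ ((r₁ + r₂) / 2) := lt_min hρ hmid.1
    have h2 : min ρ ((r₁ + r₂) / 2) < r₂ := (min_le_right _ _).trans_lt hmid.2
    exact ML.aux_neg a ρ _ (lt_of_le_of_lt hr₁ h1) (min_le_left _ _) (ha _ ⟨h1, h2⟩)
  · -- sup of negative part tends to 0 at infinity
    obtain ⟨ρ₀, hmid, hmid0⟩ : ∃ ρ₀, ρ₀ ∈ Set.Ioo r₁ r₂ ∧ 0 < ρ₀ :=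
      ⟨(r₁ + r₂) / 2, hmid, hmid0⟩
    have hg : Tendsto (fun k : ℕ => ‖a (-((k:ℤ)+1))‖ * ρ₀ ^ (-((k:ℤ)+1))) atTop (nhds 0) :=
      ML.aux_neg a ρ₀ ρ₀ hmid0 le_rfl (ha _ hmid)
    obtain ⟨C, hC⟩ := hg.bddAbove_range
    have hC' : ∀ n : ℕ, ‖a (-((n:ℤ)+1))‖ * ρ₀ ^ (-((n:ℤ)+1)) ≤ C :=
      fun n => hC ⟨n, rfl⟩
    have hC0 : 0 ≤ C := le_trans (by rw [ML.zpow_negsucc]; positivity) (hC' 0)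
    have hbound : Tendsto (fun ρ : ℝ => ENNReal.ofReal (C * ρ₀ / ρ)) atTop (nhds 0) := by
      have : Tendsto (fun ρ : ℝ => C * ρ₀ / ρ) atTop (nhds 0) := by
        simpa [div_eq_mul_inv] using tendsto_inv_atTop_zero.const_mul (C * ρ₀)
      simpa using ENNReal.tendsto_ofReal this
    refine tendsto_of_tendsto_of_tendsto_of_le_of_le' tendsto_const_nhds hbound
      (Eventually.of_forall fun ρ => zero_le) ?_
    filter_upwards [eventually_ge_atTop ρ₀] with ρ hρ
    have hρ0 : 0 < ρ := hmid0.trans_le hρ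
    refine iSup_le fun n => ENNReal.ofReal_le_ofReal ?_
    have hA : ‖a (-((n:ℤ)+1))‖ ≤ C * ρ₀ ^ (n+1) := by
      have := hC' n
      rw [ML.zpow_negsucc, ← div_eq_mul_inv, div_le_iff₀ (pow_pos hmid0 _)] at this
      linarith [this]
    calc ‖a (-((n:ℤ)+1))‖ * ρ ^ (-((n:ℤ)+1))
        = ‖a (-((n:ℤ)+1))‖ * (ρ ^ (n+1))⁻¹ := by rw [ML.zpow_negsucc]
      _ ≤ (C * ρ₀ ^ (n+1)) * (ρ ^ (n+1))⁻¹ :=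
          mul_le_mul_of_nonneg_right hA (by positivity)
      _ = C * (ρ₀ / ρ) ^ (n+1) := by rw [div_pow]; ring
      _ ≤ C * (ρ₀ / ρ) := by
          refine mul_le_mul_of_nonneg_left ?_ hC0
          simpa using pow_le_pow_of_le_one (by positivity)
            (div_le_one_of_le₀ hρ hρ0.le) (Nat.le_add_left 1 n)
      _ = C * ρ₀ / ρ := by ring
  · -- sup equality
    intro ρ hρ
    refine le_antisymm (iSup_le fun k => ?_)
      (max_le (iSup_le fun n => ?_) (iSup_le fun n => ?_))
    · rcases le_or_gt 0 k with hk | hk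
      · refine le_max_of_le_left (le_iSup_of_le k.toNat ?_)
        rw [Int.toNat_of_nonneg hk]
      · refine le_max_of_le_right (le_iSup_of_le (-k - 1).toNat ?_)
        have hk' : -(((-k - 1).toNat : ℤ) + 1) = k := by
          rw [Int.toNat_of_nonneg (by omega)]; ring
        rw [hk']
    · exact le_iSup (fun k : ℤ => ENNReal.ofReal (‖a k‖ * ρ ^ k)) (n : ℤ)
    · exact le_iSup (fun k : ℤ => ENNReal.ofReal (‖a k‖ * ρ ^ k)) (-((n:ℤ)+1))
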